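/- Every non-empty recognizable subset of the group (ℤ, +) is infinite. Consequently, the sets {0} and ℤ \ {0} are not separable by a recognizable subset of ℤ, even though they are separable by a set definable by a monadic Presburger formula over ℤ. -/

import Mathlib

/-- A subset of `(ℤ, +)` is recognizable if it is the full preimage of its image
under an additive monoid homomorphism into a finite additive monoid. -/
def RecognizableZ (S : Set ℤ) : Prop :=
  ∃ (F : Type) (_ : AddMonoid F) (_ : Finite F) (φ : ℤ →+ F), φ ⁻¹' (φ '' S) = S

/-- A subset of `ℤ` definable by a monadic Presburger formula: it is ultimately
periodic in both directions. -/
def MonadicDefinableZ (S : Set ℤ) : Prop :=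
  ∃ (n0 : ℤ) (p : ℤ), 1 ≤ p ∧ (∀ n ≥ n0, (n ∈ S ↔ n + p ∈ S)) ∧
    (∀ n ≤ -n0, (n ∈ S ↔ n - p ∈ S))

lemma rec_infinite (S : Set ℤ) (h : RecognizableZ S) (hne : S.Nonempty) : S.Infinite := by
  obtain ⟨F, _, _, φ, hφ⟩ := h
  obtain ⟨s, hs⟩ := hne
  -- φ is not injective
  have hni : ¬ Function.Injective φ := by
    intro hinj
    have : Finite ℤ := Finite.of_injective φ hinj
    exact Int.infinite.not_finite this
  obtain ⟨a, b, hab, hne⟩ : ∃ a b : ℤ, φ a = φ b ∧ a ≠ b := by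
    simp only [Function.Injective, not_forall] at hni
    obtain ⟨a, b, h1, h2⟩ := hni
    exact ⟨a, b, h1, h2⟩
  set d := a - b with hd
  have hd0 : d ≠ 0 := sub_ne_zero.mpr hne
  have hφd : φ d = 0 := by
    have : φ d + φ b = φ a := by rw [← map_add, hd, sub_add_cancel]
    have h2 : φ d + φ b = φ b := by rw [this, hab]
    have h3 : φ d + φ b + φ (-b) = φ b + φ (-b) := by rw [h2]
    have h4 : φ b + φ (-b) = 0 := by rw [← map_add]; simp
    rwa [add_assoc, h4, add_zero] at h3
  -- all s + k • d belong to S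
  have hmem : ∀ k : ℕ, s + k * d ∈ S := by
    intro k
    rw [← hφ]
    refine ⟨s, hs, ?_⟩
    have : φ (k * d) = 0 := by
      induction k with
      | zero => simp
      | succ n ih =>
        push_cast
        rw [add_mul, one_mul, map_add, hφd, add_zero]
        push_cast at ih
        exact ih
    rw [map_add, this, add_zero]
  have hinj : Function.Injective (fun k : ℕ => s + k * d) := by
    intro x y hxy
    simp only at hxy
    have : (x : ℤ) * d = y * d := by linarith [hxy]
    have := mul_right_cancel₀ hd0 this
    exact_mod_cast this
  exact Set.infinite_of_injective_forall_mem hinj hmem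

theorem recognizable_subsets_of_Z_infinite :
    (∀ S : Set ℤ, RecognizableZ S → S.Nonempty → S.Infinite) ∧
    (¬ ∃ S : Set ℤ, RecognizableZ S ∧ {(0 : ℤ)} ⊆ S ∧ S ∩ {n : ℤ | n ≠ 0} = ∅) ∧
    (∃ S : Set ℤ, MonadicDefinableZ S ∧ {(0 : ℤ)} ⊆ S ∧ S ∩ {n : ℤ | n ≠ 0} = ∅) := by
  refine ⟨rec_infinite, ?_, ?_⟩
  · rintro ⟨S, hrec, h0, hdisj⟩
    have hsub : S ⊆ {0} := by
      intro x hx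
      by_contra hne
      have : x ∈ S ∩ {n : ℤ | n ≠ 0} := ⟨hx, hne⟩
      rw [hdisj] at this
      exact this
    have hinf := rec_infinite S hrec ⟨0, h0 rfl⟩
    exact hinf (Set.Finite.subset (Set.finite_singleton 0) hsub)
  · refine ⟨{0}, ⟨1, 1, le_refl 1, ?_, ?_⟩, le_refl _, ?_⟩
    · intro n hn
      simp only [Set.mem_singleton_iff]
      omega
    · intro n hn
      simp only [Set.mem_singleton_iff]
      omega
    · ext x
      simp only [Set.mem_inter_iff, Set.mem_singleton_iff, Set.mem_setOf_eq]
      tauto
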